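/- arXiv:1303.4268 — 2 statements merged into one kernel-verified Lean document; each statement's English description precedes it below -/
import Mathlib

section
/- Let h : (0,∞) → (0,∞) be continuous with lim_{τ→0+} h(τ) = 0 and lim_{τ→0+} √τ/h(τ) = 0. Then for every real u, the quantity h(τ)·G_τ(u/h(τ)) is well defined for all sufficiently small τ > 0, and lim_{τ→0+} h(τ)·G_τ(u/h(τ)) = 0. -/
open Filter Topology Asymptotics MeasureTheory

set_option linter.unusedVariables false

noncomputable section


/-- sign convention of the paper: 1 if `0 ≤ x`, -1 otherwise. -/
def sgn' (x : ℝ) : ℝ := if 0 ≤ x then 1 else -1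

/-- principal-branch complex square root `d` of the Heston Riccati discriminant. -/
def hestD (κ ρ ξ : ℝ) (w : ℂ) : ℂ :=
  (((κ : ℂ) - (ρ : ℂ) * (ξ : ℂ) * w) ^ 2 + w * (1 - w) * (ξ : ℂ) ^ 2) ^ ((1 : ℂ) / 2)

def hestGamma (κ ρ ξ : ℝ) (w : ℂ) : ℂ :=
  ((κ : ℂ) - (ρ : ℂ) * (ξ : ℂ) * w - hestD κ ρ ξ w) /
    ((κ : ℂ) - (ρ : ℂ) * (ξ : ℂ) * w + hestD κ ρ ξ w)

def hestB (κ ρ ξ : ℝ) (w : ℂ) (τ : ℝ) : ℂ :=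
  (((κ : ℂ) - (ρ : ℂ) * (ξ : ℂ) * w - hestD κ ρ ξ w) / (ξ : ℂ) ^ 2) *
    ((1 - Complex.exp (-(hestD κ ρ ξ w) * (τ : ℂ))) /
      (1 - hestGamma κ ρ ξ w * Complex.exp (-(hestD κ ρ ξ w) * (τ : ℂ))))

def hestA (κ θ ρ ξ : ℝ) (w : ℂ) (τ : ℝ) : ℂ :=
  ((κ * θ / ξ ^ 2 : ℝ) : ℂ) *
    (((κ : ℂ) - (ρ : ℂ) * (ξ : ℂ) * w - hestD κ ρ ξ w) * (τ : ℂ) -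
      2 * Complex.log ((1 - hestGamma κ ρ ξ w * Complex.exp (-(hestD κ ρ ξ w) * (τ : ℂ))) /
        (1 - hestGamma κ ρ ξ w)))

def betaT (κ ξ t : ℝ) : ℝ := ξ ^ 2 * (1 - Real.exp (-(κ * t))) / (4 * κ)

/-- explicit Heston forward log-mgf `G_τ(w)`. -/
def hestG (κ θ ξ v ρ t : ℝ) (w : ℂ) (τ : ℝ) : ℂ :=
  hestA κ θ ρ ξ w τ +
    hestB κ ρ ξ w τ * (v : ℂ) * ((Real.exp (-(κ * t)) : ℝ) : ℂ) /
      (1 - 2 * (betaT κ ξ t : ℂ) * hestB κ ρ ξ w τ) -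
    ((2 * κ * θ / ξ ^ 2 : ℝ) : ℂ) *
      Complex.log (1 - 2 * (betaT κ ξ t : ℂ) * hestB κ ρ ξ w τ)

/-- rescaled forward log-mgf, for complex argument. -/
def hestLambdaC (κ θ ξ v ρ t τ : ℝ) (z : ℂ) : ℂ :=
  ((Real.sqrt τ : ℝ) : ℂ) * hestG κ θ ξ v ρ t (z / ((Real.sqrt τ : ℝ) : ℂ)) τ

/-- rescaled forward log-mgf `Λ_τ(u) = √τ · G_τ(u/√τ)`. -/
def hestLambda (κ θ ξ v ρ t τ : ℝ) (u : ℝ) : ℂ :=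
  hestLambdaC κ θ ξ v ρ t τ (u : ℂ)

/-- `D_{t,τ}`: the maximal open interval containing `0` on which `Λ_τ` is real-valued. -/
def hestDom (κ θ ξ v ρ t τ : ℝ) : Set ℝ :=
  connectedComponentIn (interior {u : ℝ | (hestLambda κ θ ξ v ρ t τ u).im = 0}) 0



set_option maxHeartbeats 1000000

lemma cpow_half_of_nonneg (x : ℝ) (hx : 0 ≤ x) : (x:ℂ) ^ ((1:ℂ)/2) = (Real.sqrt x : ℂ) := by
  have : ((1:ℂ)/2) = ((1/2 : ℝ) : ℂ) := by norm_num
  rw [this, ← Complex.ofReal_cpow hx, ← Real.sqrt_eq_rpow]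

lemma cpow_half_of_neg (x : ℝ) (hx : x < 0) :
    (x:ℂ) ^ ((1:ℂ)/2) = (Real.sqrt (-x) : ℂ) * Complex.I := by
  rw [Complex.ofReal_cpow_of_nonpos hx.le]
  have h1 : (-(x:ℂ)) = ((-x : ℝ) : ℂ) := by push_cast; ring
  have h2 : ((-x:ℝ):ℂ) ^ ((1:ℂ)/2) = (Real.sqrt (-x) : ℂ) := cpow_half_of_nonneg (-x) (by linarith)
  rw [h1, h2]
  congr 1
  have : (Real.pi : ℂ) * Complex.I * ((1:ℂ)/2) = ((Real.pi/2 : ℝ):ℂ) * Complex.I := by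
    push_cast; ring
  rw [this, Complex.exp_mul_I]
  rw [← Complex.ofReal_cos, ← Complex.ofReal_sin]
  norm_num [Real.cos_pi_div_two, Real.sin_pi_div_two]

def Wfun (u : ℝ) (h : ℝ → ℝ) (τ : ℝ) : ℂ := (u : ℂ) / ((h τ : ℝ) : ℂ)

lemma hest_main (κ θ ξ v ρ t : ℝ) (hκ : 0 < κ) (hθ : 0 < θ) (hξ : 0 < ξ)
    (hv : 0 < v) (hρ : ρ ∈ Set.Ioo (-1 : ℝ) 1) (ht : 0 < t)
    (h : ℝ → ℝ) (hpos : ∀ τ ∈ Set.Ioi (0 : ℝ), 0 < h τ)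
    (hlim : Tendsto h (𝓝[>] (0 : ℝ)) (𝓝 0))
    (hrat : Tendsto (fun τ : ℝ => Real.sqrt τ / h τ) (𝓝[>] (0 : ℝ)) (𝓝 0))
    (u : ℝ) (hu : u ≠ 0) :
    (∀ᶠ τ in 𝓝[>] (0 : ℝ),
      ((1 - hestGamma κ ρ ξ (Wfun u h τ) *
            Complex.exp (-(hestD κ ρ ξ (Wfun u h τ)) * (τ : ℂ))) /
          (1 - hestGamma κ ρ ξ (Wfun u h τ))) ≠ 0 ∧
      (1 - 2 * (betaT κ ξ t : ℂ) * hestB κ ρ ξ (Wfun u h τ) τ) ≠ 0) ∧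
    Tendsto (fun τ : ℝ => ((h τ : ℝ) : ℂ) *
        hestG κ θ ξ v ρ t (Wfun u h τ) τ)
      (𝓝[>] (0 : ℝ)) (𝓝 0) := by
  have hρ2 : ρ ^ 2 < 1 := by obtain ⟨h1, h2⟩ := hρ; nlinarith
  have hτpos : ∀ᶠ τ in 𝓝[>] (0:ℝ), 0 < τ := self_mem_nhdsWithin
  have hspos : ∀ᶠ τ in 𝓝[>] (0:ℝ), 0 < h τ := hτpos.mono fun τ hh => hpos τ hh
  have hsC : Tendsto (fun τ => ((h τ : ℝ):ℂ)) (𝓝[>] (0:ℝ)) (𝓝 0) := by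
    simpa [Function.comp_def] using (Complex.continuous_ofReal.tendsto (0:ℝ)).comp hlim
  have hτR : Tendsto (fun τ : ℝ => τ) (𝓝[>] (0:ℝ)) (𝓝 0) :=
    tendsto_id.mono_left nhdsWithin_le_nhds
  have hτC : Tendsto (fun τ : ℝ => (τ:ℂ)) (𝓝[>] (0:ℝ)) (𝓝 0) := by
    simpa [Function.comp_def] using (Complex.continuous_ofReal.tendsto (0:ℝ)).comp hτR
  have hsqrt0 : Tendsto (fun τ : ℝ => Real.sqrt τ) (𝓝[>] (0:ℝ)) (𝓝 0) := by
    simpa [Function.comp_def] using (Real.continuous_sqrt.tendsto (0:ℝ)).comp hτR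
  have hτh : Tendsto (fun τ => τ / h τ) (𝓝[>] (0:ℝ)) (𝓝 0) := by
    have base := hsqrt0.mul hrat
    rw [mul_zero] at base
    apply base.congr'
    filter_upwards [hτpos] with τ hτ
    rw [mul_div_assoc', Real.mul_self_sqrt hτ.le]
  have hτh2 : Tendsto (fun τ => τ / (h τ)^2) (𝓝[>] (0:ℝ)) (𝓝 0) := by
    have base := hrat.mul hrat
    rw [mul_zero] at base
    apply base.congr'
    filter_upwards [hτpos] with τ hτ
    rw [div_mul_div_comm, Real.mul_self_sqrt hτ.le, ← pow_two]
  have hτhC : Tendsto (fun τ : ℝ => (τ:ℂ) / ((h τ : ℝ):ℂ)) (𝓝[>] (0:ℝ)) (𝓝 0) := by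
    simpa [Function.comp_def] using (Complex.continuous_ofReal.tendsto (0:ℝ)).comp hτh
  have hτh2C : Tendsto (fun τ : ℝ => (τ:ℂ) / ((h τ : ℝ):ℂ)^2) (𝓝[>] (0:ℝ)) (𝓝 0) := by
    simpa [Function.comp_def] using (Complex.continuous_ofReal.tendsto (0:ℝ)).comp hτh2
  set p : ℝ → ℝ := fun x => (x*κ - ρ*ξ*u)^2 + u*(x-u)*ξ^2 with hpdef
  have hpcont : Continuous p := by fun_prop
  have hu2 : 0 < u^2 := by positivity
  have hξ2 : 0 < ξ^2 := by positivity
  have hp0 : p 0 < 0 := by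
    simp only [hpdef]
    nlinarith [mul_pos (show (0:ℝ) < 1 - ρ^2 by nlinarith) (mul_pos hu2 hξ2)]
  have hpev : ∀ᶠ τ in 𝓝[>] (0:ℝ), p (h τ) < 0 :=
    ((hpcont.tendsto 0).comp hlim).eventually_lt_const hp0
  set Dinf : ℝ := Real.sqrt (-(p 0)) with hDdef
  have hDpos : 0 < Dinf := Real.sqrt_pos.mpr (by linarith)
  -- eventual formula for d
  have E_d : ∀ᶠ τ in 𝓝[>] (0:ℝ), hestD κ ρ ξ (Wfun u h τ)
      = ((Real.sqrt (-(p (h τ))) / h τ : ℝ):ℂ) * Complex.I := by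
    filter_upwards [hspos, hpev] with τ hs hp
    have hsne : ((h τ:ℝ):ℂ) ≠ 0 := by exact_mod_cast hs.ne'
    have hΔ : ((κ : ℂ) - (ρ : ℂ) * (ξ : ℂ) * Wfun u h τ) ^ 2
        + Wfun u h τ * (1 - Wfun u h τ) * (ξ : ℂ) ^ 2
        = ((p (h τ) / (h τ)^2 : ℝ):ℂ) := by
      simp only [Wfun, hpdef]
      push_cast
      field_simp
    unfold hestD
    rw [hΔ, cpow_half_of_neg _ (div_neg_of_neg_of_pos hp (by positivity))]
    have h1 : -(p (h τ) / (h τ)^2) = (-(p (h τ))) / (h τ)^2 := by ring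
    rw [h1, Real.sqrt_div (by linarith) _, Real.sqrt_sq hs.le]
  -- s * d → Dinf * I
  have L_sd : Tendsto (fun τ => ((h τ:ℝ):ℂ) * hestD κ ρ ξ (Wfun u h τ)) (𝓝[>] (0:ℝ))
      (𝓝 ((Dinf:ℂ) * Complex.I)) := by
    have base : Tendsto (fun τ => ((Real.sqrt (-(p (h τ))) : ℝ):ℂ) * Complex.I) (𝓝[>] (0:ℝ))
        (𝓝 ((Dinf:ℂ) * Complex.I)) := by
      have c1 : Continuous (fun x : ℝ => ((Real.sqrt (-(p x)) : ℝ):ℂ)) := by fun_prop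
      exact ((c1.tendsto 0).comp hlim).mul_const Complex.I
    apply base.congr'
    filter_upwards [E_d, hspos] with τ hd hs
    have hsne : ((h τ:ℝ):ℂ) ≠ 0 := by exact_mod_cast hs.ne'
    rw [hd]
    push_cast
    field_simp
  -- s * (κ - ρ ξ W) → -(ρ ξ u)
  have L_sc : Tendsto (fun τ => ((h τ:ℝ):ℂ) * ((κ:ℂ) - (ρ:ℂ)*(ξ:ℂ)*(Wfun u h τ)))
      (𝓝[>] (0:ℝ)) (𝓝 (-((ρ:ℂ)*(ξ:ℂ)*(u:ℂ)))) := by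
    have base : Tendsto (fun τ => ((h τ:ℝ):ℂ)*(κ:ℂ) - (ρ:ℂ)*(ξ:ℂ)*(u:ℂ)) (𝓝[>] (0:ℝ))
        (𝓝 (-((ρ:ℂ)*(ξ:ℂ)*(u:ℂ)))) := by
      simpa using (hsC.mul_const ((κ:ℂ))).sub
        (tendsto_const_nhds (x := (ρ:ℂ)*(ξ:ℂ)*(u:ℂ)))
    apply base.congr'
    filter_upwards [hspos] with τ hs
    have hsne : ((h τ:ℝ):ℂ) ≠ 0 := by exact_mod_cast hs.ne'
    simp only [Wfun]
    field_simp
  set NC : ℂ := -((ρ:ℂ)*(ξ:ℂ)*(u:ℂ)) - (Dinf:ℂ)*Complex.I with hNCdef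
  set MC : ℂ := -((ρ:ℂ)*(ξ:ℂ)*(u:ℂ)) + (Dinf:ℂ)*Complex.I with hMCdef
  have L_num : Tendsto (fun τ => ((h τ:ℝ):ℂ) *
      ((κ:ℂ) - (ρ:ℂ)*(ξ:ℂ)*(Wfun u h τ) - hestD κ ρ ξ (Wfun u h τ))) (𝓝[>] (0:ℝ)) (𝓝 NC) := by
    exact (L_sc.sub L_sd).congr (fun τ => by ring)
  have L_den : Tendsto (fun τ => ((h τ:ℝ):ℂ) *
      ((κ:ℂ) - (ρ:ℂ)*(ξ:ℂ)*(Wfun u h τ) + hestD κ ρ ξ (Wfun u h τ))) (𝓝[>] (0:ℝ)) (𝓝 MC) := by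
    exact (L_sc.add L_sd).congr (fun τ => by ring)
  have hMC : MC ≠ 0 := by
    intro hh
    have him := congrArg Complex.im hh
    simp [hMCdef] at him
    exact hDpos.ne' him
  have hNC : NC ≠ 0 := by
    intro hh
    have him := congrArg Complex.im hh
    simp [hNCdef] at him
    exact hDpos.ne' him
  have L_gamma : Tendsto (fun τ => hestGamma κ ρ ξ (Wfun u h τ)) (𝓝[>] (0:ℝ)) (𝓝 (NC/MC)) := by
    have base := L_num.div L_den hMC
    apply base.congr'
    filter_upwards [hspos] with τ hs
    have hsne : ((h τ:ℝ):ℂ) ≠ 0 := by exact_mod_cast hs.ne'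
    simp only [Pi.div_apply]
    unfold hestGamma
    rw [mul_div_mul_left _ _ hsne]
  have hγ1 : NC/MC ≠ 1 := by
    intro hh
    rw [div_eq_one_iff_eq hMC] at hh
    have him := congrArg Complex.im hh
    simp [hNCdef, hMCdef] at him
    linarith
  have h1γ : (1:ℂ) - NC/MC ≠ 0 := sub_ne_zero.mpr (Ne.symm hγ1)
  -- d τ * τ → 0
  have L_dτ : Tendsto (fun τ => -(hestD κ ρ ξ (Wfun u h τ)) * (τ:ℂ)) (𝓝[>] (0:ℝ)) (𝓝 0) := by
    have base := (L_sd.mul hτhC).neg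
    rw [mul_zero, neg_zero] at base
    apply base.congr'
    filter_upwards [hspos] with τ hs
    have hsne : ((h τ:ℝ):ℂ) ≠ 0 := by exact_mod_cast hs.ne'
    push_cast
    field_simp
  have L_exp : Tendsto (fun τ => Complex.exp (-(hestD κ ρ ξ (Wfun u h τ)) * (τ:ℂ)))
      (𝓝[>] (0:ℝ)) (𝓝 1) := by
    simpa [Function.comp_def] using (Complex.continuous_exp.tendsto 0).comp L_dτ
  have L_1γe : Tendsto (fun τ => 1 - hestGamma κ ρ ξ (Wfun u h τ) *
      Complex.exp (-(hestD κ ρ ξ (Wfun u h τ)) * (τ:ℂ))) (𝓝[>] (0:ℝ)) (𝓝 (1 - NC/MC)) := by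
    simpa using tendsto_const_nhds.sub (L_gamma.mul L_exp)
  have L_1γ : Tendsto (fun τ => 1 - hestGamma κ ρ ξ (Wfun u h τ)) (𝓝[>] (0:ℝ))
      (𝓝 (1 - NC/MC)) := tendsto_const_nhds.sub L_gamma
  have L_ratio : Tendsto (fun τ => (1 - hestGamma κ ρ ξ (Wfun u h τ) *
      Complex.exp (-(hestD κ ρ ξ (Wfun u h τ)) * (τ:ℂ))) /
      (1 - hestGamma κ ρ ξ (Wfun u h τ))) (𝓝[>] (0:ℝ)) (𝓝 1) := by
    have := L_1γe.div L_1γ h1γ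
    rwa [div_self h1γ] at this
  have Ev1 := L_ratio.eventually_ne one_ne_zero
  have L_logratio : Tendsto (fun τ => Complex.log ((1 - hestGamma κ ρ ξ (Wfun u h τ) *
      Complex.exp (-(hestD κ ρ ξ (Wfun u h τ)) * (τ:ℂ))) /
      (1 - hestGamma κ ρ ξ (Wfun u h τ)))) (𝓝[>] (0:ℝ)) (𝓝 0) := by
    have := L_ratio.clog (by simp [Complex.mem_slitPlane_iff])
    simpa [Complex.log_one] using this
  -- d ≠ 0 eventually
  have hdne : ∀ᶠ τ in 𝓝[>] (0:ℝ), hestD κ ρ ξ (Wfun u h τ) ≠ 0 := by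
    have hne : (Dinf:ℂ) * Complex.I ≠ 0 :=
      mul_ne_zero (Complex.ofReal_ne_zero.mpr hDpos.ne') Complex.I_ne_zero
    filter_upwards [L_sd.eventually_ne hne] with τ hτ
    exact fun hc => hτ (by rw [hc, mul_zero])
  have hz_ne : ∀ᶠ τ in 𝓝[>] (0:ℝ), -(hestD κ ρ ξ (Wfun u h τ)) * (τ:ℂ) ≠ 0 := by
    filter_upwards [hdne, hτpos] with τ h1 h2
    exact mul_ne_zero (neg_ne_zero.mpr h1) (by exact_mod_cast h2.ne')
  have L_z : Tendsto (fun τ => -(hestD κ ρ ξ (Wfun u h τ)) * (τ:ℂ)) (𝓝[>] (0:ℝ))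
      (𝓝[≠] (0:ℂ)) := by
    rw [tendsto_nhdsWithin_iff]
    exact ⟨L_dτ, hz_ne.mono fun τ hτ => by simpa using hτ⟩
  have L_q : Tendsto (fun τ => (Complex.exp (-(hestD κ ρ ξ (Wfun u h τ)) * (τ:ℂ)) - 1) /
      (-(hestD κ ρ ξ (Wfun u h τ)) * (τ:ℂ))) (𝓝[>] (0:ℝ)) (𝓝 1) := by
    have hder : HasDerivAt Complex.exp 1 0 := by simpa using Complex.hasDerivAt_exp 0
    have hs := hasDerivAt_iff_tendsto_slope.mp hder
    have := hs.comp L_z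
    apply this.congr
    intro τ
    simp [Function.comp, slope_def_field, Complex.exp_zero]
  have key : ∀ᶠ τ in 𝓝[>] (0:ℝ), 1 - Complex.exp (-(hestD κ ρ ξ (Wfun u h τ)) * (τ:ℂ))
      = ((Complex.exp (-(hestD κ ρ ξ (Wfun u h τ)) * (τ:ℂ)) - 1) /
          (-(hestD κ ρ ξ (Wfun u h τ)) * (τ:ℂ))) * (hestD κ ρ ξ (Wfun u h τ) * (τ:ℂ)) := by
    filter_upwards [hz_ne] with τ hz
    have hX : hestD κ ρ ξ (Wfun u h τ) * (τ:ℂ) ≠ 0 := by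
      intro hc; exact hz (by rw [neg_mul, hc, neg_zero])
    rw [neg_mul, div_neg, neg_mul, div_mul_cancel₀ _ hX]
    ring
  have ev_1γe_ne : ∀ᶠ τ in 𝓝[>] (0:ℝ), (1 - hestGamma κ ρ ξ (Wfun u h τ) *
      Complex.exp (-(hestD κ ρ ξ (Wfun u h τ)) * (τ:ℂ))) ≠ 0 := L_1γe.eventually_ne h1γ
  -- s * B → 0
  have L_sB : Tendsto (fun τ => ((h τ:ℝ):ℂ) * hestB κ ρ ξ (Wfun u h τ) τ) (𝓝[>] (0:ℝ))
      (𝓝 0) := by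
    have base := ((L_num.div_const ((ξ:ℂ)^2)).mul
      (((tendsto_const_nhds (x := (1:ℂ))).sub L_exp).div L_1γe h1γ))
    simp only [sub_self, zero_div, mul_zero] at base
    exact base.congr (fun τ => by simp only [Pi.div_apply]; unfold hestB; ring)
  -- B → 0
  have L_B : Tendsto (fun τ => hestB κ ρ ξ (Wfun u h τ) τ) (𝓝[>] (0:ℝ)) (𝓝 0) := by
    have base := (((L_num.div_const ((ξ:ℂ)^2)).mul
      ((L_q.mul L_sd).mul hτh2C)).div L_1γe h1γ)
    simp only [one_mul, mul_zero, zero_div] at base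
    apply base.congr'
    filter_upwards [hspos, key, ev_1γe_ne, hdne, hτpos] with τ hs hk h1e hd hτ
    have hsne : ((h τ:ℝ):ℂ) ≠ 0 := by exact_mod_cast hs.ne'
    have hτne : (τ:ℂ) ≠ 0 := by exact_mod_cast hτ.ne'
    have hξne : ((ξ:ℝ):ℂ) ≠ 0 := by exact_mod_cast hξ.ne'
    simp only [Pi.div_apply]
    unfold hestB
    rw [hk]
    have h1 : ((h τ:ℝ):ℂ) * ((κ:ℂ) - (ρ:ℂ)*(ξ:ℂ)*(Wfun u h τ) - hestD κ ρ ξ (Wfun u h τ)) / (ξ:ℂ)^2 *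
        ((Complex.exp (-(hestD κ ρ ξ (Wfun u h τ)) * (τ:ℂ)) - 1) /
            (-(hestD κ ρ ξ (Wfun u h τ)) * (τ:ℂ)) *
          (((h τ:ℝ):ℂ) * hestD κ ρ ξ (Wfun u h τ)) * ((τ:ℂ) / ((h τ:ℝ):ℂ)^2))
        = ((κ:ℂ) - (ρ:ℂ)*(ξ:ℂ)*(Wfun u h τ) - hestD κ ρ ξ (Wfun u h τ)) / (ξ:ℂ)^2 *
          ((Complex.exp (-(hestD κ ρ ξ (Wfun u h τ)) * (τ:ℂ)) - 1) /
              (-(hestD κ ρ ξ (Wfun u h τ)) * (τ:ℂ)) *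
            (hestD κ ρ ξ (Wfun u h τ) * (τ:ℂ))) := by
      field_simp
    rw [h1, mul_div_assoc]
  have L_2βB : Tendsto (fun τ => 2 * (betaT κ ξ t : ℂ) * hestB κ ρ ξ (Wfun u h τ) τ)
      (𝓝[>] (0:ℝ)) (𝓝 0) := by
    simpa using L_B.const_mul (2 * (betaT κ ξ t : ℂ))
  have L_1_2βB : Tendsto (fun τ => 1 - 2 * (betaT κ ξ t : ℂ) * hestB κ ρ ξ (Wfun u h τ) τ)
      (𝓝[>] (0:ℝ)) (𝓝 1) := by
    simpa using tendsto_const_nhds.sub L_2βB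
  have Ev2 := L_1_2βB.eventually_ne one_ne_zero
  have L_log2 : Tendsto (fun τ => Complex.log (1 - 2 * (betaT κ ξ t : ℂ) *
      hestB κ ρ ξ (Wfun u h τ) τ)) (𝓝[>] (0:ℝ)) (𝓝 0) := by
    have := L_1_2βB.clog (by simp [Complex.mem_slitPlane_iff])
    simpa [Complex.log_one] using this
  refine ⟨?_, ?_⟩
  · filter_upwards [Ev1, Ev2] with τ h1 h2
    exact ⟨h1, h2⟩
  · -- assemble
    have L_f1 : Tendsto (fun τ => ((h τ:ℝ):ℂ) * hestA κ θ ρ ξ (Wfun u h τ) τ)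
        (𝓝[>] (0:ℝ)) (𝓝 0) := by
      have base := tendsto_const_nhds (x := ((κ * θ / ξ ^ 2 : ℝ) : ℂ)) |>.mul
        ((L_num.mul hτC).sub ((hsC.const_mul (2:ℂ)).mul L_logratio))
      simp only [mul_zero, zero_mul, sub_zero] at base
      exact base.congr (fun τ => by unfold hestA; ring)
    have L_f2 : Tendsto (fun τ => ((h τ:ℝ):ℂ) * (hestB κ ρ ξ (Wfun u h τ) τ * (v : ℂ) *
        ((Real.exp (-(κ * t)) : ℝ) : ℂ) /
        (1 - 2 * (betaT κ ξ t : ℂ) * hestB κ ρ ξ (Wfun u h τ) τ)))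
        (𝓝[>] (0:ℝ)) (𝓝 0) := by
      have base := ((L_sB.mul_const ((v:ℂ))).mul_const
        (((Real.exp (-(κ * t)) : ℝ) : ℂ))).div L_1_2βB one_ne_zero
      simp only [zero_mul, zero_div] at base
      exact base.congr (fun τ => by simp only [Pi.div_apply]; ring)
    have L_f3 : Tendsto (fun τ => ((h τ:ℝ):ℂ) * (((2 * κ * θ / ξ ^ 2 : ℝ) : ℂ) *
        Complex.log (1 - 2 * (betaT κ ξ t : ℂ) * hestB κ ρ ξ (Wfun u h τ) τ)))
        (𝓝[>] (0:ℝ)) (𝓝 0) := by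
      have base := (hsC.mul_const (((2 * κ * θ / ξ ^ 2 : ℝ) : ℂ))).mul L_log2
      simp only [zero_mul, mul_zero] at base
      exact base.congr (fun τ => by ring)
    have final := (L_f1.add L_f2).sub L_f3
    simp only [add_zero, sub_zero] at final
    exact final.congr (fun τ => by unfold hestG; ring)


lemma hestD_zero (κ ρ ξ : ℝ) (hκ : 0 < κ) : hestD κ ρ ξ 0 = (κ : ℂ) := by
  unfold hestD
  have h1 : ((κ : ℂ) - (ρ : ℂ) * (ξ : ℂ) * 0) ^ 2 + 0 * (1 - 0) * (ξ : ℂ) ^ 2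
      = ((κ^2 : ℝ) : ℂ) := by push_cast; ring
  rw [h1, cpow_half_of_nonneg _ (sq_nonneg κ), Real.sqrt_sq hκ.le]

lemma hestGamma_zero (κ ρ ξ : ℝ) (hκ : 0 < κ) : hestGamma κ ρ ξ 0 = 0 := by
  unfold hestGamma; rw [hestD_zero κ ρ ξ hκ]; simp

lemma hestB_zero (κ ρ ξ : ℝ) (hκ : 0 < κ) (τ : ℝ) : hestB κ ρ ξ 0 τ = 0 := by
  unfold hestB; rw [hestD_zero κ ρ ξ hκ]; simp

lemma hestA_zero (κ θ ρ ξ : ℝ) (hκ : 0 < κ) (τ : ℝ) : hestA κ θ ρ ξ 0 τ = 0 := by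
  unfold hestA
  rw [hestD_zero κ ρ ξ hκ, hestGamma_zero κ ρ ξ hκ]
  simp

lemma hestG_zero (κ θ ξ v ρ t : ℝ) (hκ : 0 < κ) (τ : ℝ) : hestG κ θ ξ v ρ t 0 τ = 0 := by
  unfold hestG
  rw [hestA_zero κ θ ρ ξ hκ, hestB_zero κ ρ ξ hκ]
  simp


theorem stmt1 (κ θ ξ v ρ t : ℝ) (hκ : 0 < κ) (hθ : 0 < θ) (hξ : 0 < ξ)
    (hv : 0 < v) (hρ : ρ ∈ Set.Ioo (-1 : ℝ) 1) (ht : 0 < t)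
    (h : ℝ → ℝ) (hpos : ∀ τ ∈ Set.Ioi (0 : ℝ), 0 < h τ)
    (hcont : ContinuousOn h (Set.Ioi 0))
    (hlim : Tendsto h (𝓝[>] (0 : ℝ)) (𝓝 0))
    (hrat : Tendsto (fun τ : ℝ => Real.sqrt τ / h τ) (𝓝[>] (0 : ℝ)) (𝓝 0))
    (u : ℝ) :
    (∀ᶠ τ in 𝓝[>] (0 : ℝ),
      ((1 - hestGamma κ ρ ξ ((u : ℂ) / ((h τ : ℝ) : ℂ)) *
            Complex.exp (-(hestD κ ρ ξ ((u : ℂ) / ((h τ : ℝ) : ℂ))) * (τ : ℂ))) /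
          (1 - hestGamma κ ρ ξ ((u : ℂ) / ((h τ : ℝ) : ℂ)))) ≠ 0 ∧
      (1 - 2 * (betaT κ ξ t : ℂ) * hestB κ ρ ξ ((u : ℂ) / ((h τ : ℝ) : ℂ)) τ) ≠ 0) ∧
    Tendsto (fun τ : ℝ => ((h τ : ℝ) : ℂ) *
        hestG κ θ ξ v ρ t ((u : ℂ) / ((h τ : ℝ) : ℂ)) τ)
      (𝓝[>] (0 : ℝ)) (𝓝 0) := by
  rcases eq_or_ne u 0 with hu | hu
  · subst hu
    constructor
    · filter_upwards with τ
      simp only [Complex.ofReal_zero, zero_div]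
      rw [hestGamma_zero κ ρ ξ hκ, hestB_zero κ ρ ξ hκ]
      norm_num
    · have heq : ∀ τ : ℝ, ((h τ : ℝ):ℂ) * hestG κ θ ξ v ρ t (((0:ℝ):ℂ) / ((h τ:ℝ):ℂ)) τ = 0 := by
        intro τ
        rw [show ((0:ℝ):ℂ) / ((h τ:ℝ):ℂ) = 0 by simp, hestG_zero κ θ ξ v ρ t hκ τ, mul_zero]
      exact Tendsto.congr (fun τ => (heq τ).symm) tendsto_const_nhds
  · exact hest_main κ θ ξ v ρ t hκ hθ hξ hv hρ ht h hpos hlim hrat u hu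

end
end

section
/- Fix a constant a > 0 and a real u ≠ 0. Then lim_{τ→0+} B(u/(a√τ), τ) = u²/(2a²) (limit in ℂ). -/
open Filter Topology Asymptotics MeasureTheory

set_option linter.unusedVariables false

noncomputable section


lemma aux_B (κ ρ ξ τr : ℝ) (w dd : ℂ) (hdd : dd = hestD κ ρ ξ w)
    (hsq : dd^2 = ((κ:ℂ)-(ρ:ℂ)*(ξ:ℂ)*w)^2 + w*(1-w)*(ξ:ℂ)^2)
    (hτ : (τr:ℂ) ≠ 0) (hξ : (ξ:ℂ) ≠ 0) (hd : dd ≠ 0)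
    (hP : ((κ:ℂ)-(ρ:ℂ)*(ξ:ℂ)*w + dd) ≠ 0)
    (hK : (2 + ((κ:ℂ)-(ρ:ℂ)*(ξ:ℂ)*w - dd) * (τr:ℂ) *
        ((1 - Complex.exp (-(dd * (τr:ℂ))))/(dd * (τr:ℂ)))) ≠ 0) :
    hestB κ ρ ξ w τr = w*(w-1)*(τr:ℂ) * ((1 - Complex.exp (-(dd*(τr:ℂ))))/(dd*(τr:ℂ))) *
      (2 + ((κ:ℂ)-(ρ:ℂ)*(ξ:ℂ)*w - dd)*(τr:ℂ)*((1 - Complex.exp (-(dd*(τr:ℂ))))/(dd*(τr:ℂ))))⁻¹ := by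
  set e := Complex.exp (-(dd * (τr:ℂ))) with he_def
  set N : ℂ := (κ:ℂ)-(ρ:ℂ)*(ξ:ℂ)*w - dd with hN_def
  set P : ℂ := (κ:ℂ)-(ρ:ℂ)*(ξ:ℂ)*w + dd with hP_def
  have hNP : N * P = w*(w-1)*(ξ:ℂ)^2 := by
    rw [hN_def, hP_def]; linear_combination (-1:ℂ) * hsq
  have hzC : dd * (τr:ℂ) ≠ 0 := mul_ne_zero hd hτ
  have hDK : dd * (2 + N * (τr:ℂ) * ((1-e)/(dd*(τr:ℂ)))) = 2*dd + N*(1-e) := by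
    field_simp
  have hDKne : 2*dd + N*(1-e) ≠ 0 := by
    rw [← hDK]; exact mul_ne_zero hd hK
  have hγ : 1 - (N/P)*e = (2*dd + N*(1-e))/P := by
    field_simp
    rw [hP_def, hN_def]
    ring
  have hK2 : 2 + N * (τr:ℂ) * ((1-e)/(dd*(τr:ℂ))) = (2*dd + N*(1-e))/dd := by
    rw [eq_div_iff hd, mul_comm _ dd, hDK]
  rw [hestB, hestGamma, ← hdd]
  simp only [neg_mul, ← he_def, ← hN_def, ← hP_def]
  rw [hγ, hK2, div_div_eq_mul_div, inv_div]
  field_simp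
  linear_combination (1-e) * hNP


lemma aux_expQ : Tendsto (fun z : ℂ => (1 - Complex.exp (-z)) / z) (𝓝[≠] (0:ℂ)) (𝓝 1) := by
  have h1 : HasDerivAt (fun z : ℂ => Complex.exp (-z)) (-1 : ℂ) 0 := by
    simpa [Function.comp_def] using (Complex.hasDerivAt_exp (-0 : ℂ)).comp 0 (hasDerivAt_neg (0:ℂ))
  have h : HasDerivAt (fun z : ℂ => 1 - Complex.exp (-z)) 1 (0 : ℂ) := by
    simpa using h1.const_sub 1
  rw [hasDerivAt_iff_tendsto_slope] at h
  refine h.congr ?_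
  intro z
  simp [slope_def_field, Complex.exp_zero]

lemma aux_sq (x : ℂ) : (x ^ ((1:ℂ)/2)) ^ 2 = x := by
  rw [show ((1:ℂ)/2) = (((2:ℕ):ℂ))⁻¹ by norm_num]
  exact_mod_cast Complex.cpow_nat_inv_pow x two_ne_zero

set_option maxHeartbeats 1600000


theorem stmt4 (κ θ ξ v ρ t : ℝ) (hκ : 0 < κ) (hθ : 0 < θ) (hξ : 0 < ξ)
    (hv : 0 < v) (hρ : ρ ∈ Set.Ioo (-1 : ℝ) 1) (ht : 0 < t)
    (a : ℝ) (ha : 0 < a) (u : ℝ) (hu : u ≠ 0) :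
    Tendsto (fun τ : ℝ => hestB κ ρ ξ ((u : ℂ) / ((a * Real.sqrt τ : ℝ) : ℂ)) τ)
      (𝓝[>] (0 : ℝ)) (𝓝 ((u ^ 2 / (2 * a ^ 2) : ℝ) : ℂ)) := by
  have hρ1 : (0:ℝ) < 1 - ρ^2 := by nlinarith [hρ.1, hρ.2]
  set l := 𝓝[>] (0:ℝ) with hl
  set c : ℝ := u / a with hc_def
  have hc : c ≠ 0 := div_ne_zero hu (ne_of_gt ha)
  set wr : ℝ → ℝ := fun τ => c / Real.sqrt τ with hwr_def
  set rr : ℝ → ℝ := fun τ => (κ - ρ*ξ*wr τ)^2 + wr τ*(1-wr τ)*ξ^2 with hrr_def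
  set D : ℝ → ℂ := fun τ => hestD κ ρ ξ ((wr τ : ℝ):ℂ) with hD_def
  set N : ℝ → ℂ := fun τ => (κ:ℂ) - (ρ:ℂ)*(ξ:ℂ)*((wr τ : ℝ):ℂ) - D τ with hN_def
  set Q : ℝ → ℂ := fun τ => (1 - Complex.exp (-(D τ * (τ:ℂ)))) / (D τ * (τ:ℂ)) with hQ_def
  -- rewrite the argument as a real cast
  have hW : ∀ τ : ℝ, ((u:ℂ) / ((a * Real.sqrt τ : ℝ):ℂ)) = ((wr τ : ℝ):ℂ) := by
    intro τ
    rw [hwr_def]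
    push_cast
    rw [hc_def]
    push_cast
    ring
  simp only [hW]
  -- D as a cast of a real number raised to 1/2
  have hD : ∀ τ : ℝ, D τ = ((rr τ : ℝ):ℂ) ^ ((1:ℂ)/2) := by
    intro τ
    rw [hD_def]
    unfold hestD
    have hbase : ((κ:ℂ) - (ρ:ℂ)*(ξ:ℂ)*((wr τ : ℝ):ℂ))^2 + ((wr τ : ℝ):ℂ)*(1-((wr τ : ℝ):ℂ))*((ξ:ℂ))^2 = ((rr τ : ℝ):ℂ) := by
      rw [hrr_def]
      push_cast
      ring
    beta_reduce
    rw [hbase]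
  have hDsq : ∀ τ : ℝ, (D τ)^2 = ((rr τ : ℝ):ℂ) := by
    intro τ; rw [hD]; exact aux_sq _
  -- basic limits
  have htau0 : Tendsto (fun τ : ℝ => τ) l (𝓝 0) := tendsto_id.mono_left nhdsWithin_le_nhds
  have hs : Tendsto (fun τ : ℝ => Real.sqrt τ) l (𝓝 0) := by
    have h := (Real.continuous_sqrt.tendsto 0).mono_left (nhdsWithin_le_nhds (s := Set.Ioi (0:ℝ)))
    simpa using h
  have hrt : Tendsto (fun τ => rr τ * τ) l (𝓝 (-((1-ρ^2)*ξ^2*c^2))) := by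
    have key : Tendsto (fun s : ℝ => (κ*s - ρ*ξ*c)^2 + c*ξ^2*s - c^2*ξ^2) (𝓝 0)
        (𝓝 (-((1-ρ^2)*ξ^2*c^2))) := by
      have hcont : Continuous fun s : ℝ => (κ*s - ρ*ξ*c)^2 + c*ξ^2*s - c^2*ξ^2 := by
        continuity
      have h0 := hcont.tendsto 0
      convert h0 using 1
      norm_num
      ring
    refine Tendsto.congr' ?_ (key.comp hs)
    filter_upwards [self_mem_nhdsWithin] with τ hτ
    have hτ' : (0:ℝ) < τ := hτ
    have hsp : 0 < Real.sqrt τ := Real.sqrt_pos.mpr hτ'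
    have hss : Real.sqrt τ * Real.sqrt τ = τ := Real.mul_self_sqrt hτ'.le
    show (κ*Real.sqrt τ - ρ*ξ*c)^2 + c*ξ^2*Real.sqrt τ - c^2*ξ^2 = rr τ * τ
    rw [hrr_def, hwr_def]
    field_simp
    rw [Real.sq_sqrt hτ'.le]; ring
  have hrneg : ∀ᶠ τ in l, rr τ < 0 := by
    have h1 : ∀ᶠ τ in l, rr τ * τ < 0 := by
      have : -((1-ρ^2)*ξ^2*c^2) < 0 := by
        have : 0 < (1-ρ^2)*ξ^2*c^2 := by positivity
        linarith
      exact hrt.eventually (eventually_lt_nhds this)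
    filter_upwards [h1, self_mem_nhdsWithin] with τ h1 h2
    by_contra h
    exact absurd h1 (not_lt.mpr (mul_nonneg (not_lt.mp h) (le_of_lt h2)))
  have hτpos : ∀ᶠ τ in l, (0:ℝ) < τ := self_mem_nhdsWithin
  have hz0 : Tendsto (fun τ => D τ * (τ:ℂ)) l (𝓝 0) := by
    rw [tendsto_zero_iff_norm_tendsto_zero]
    have hnorm : ∀ τ : ℝ, ‖D τ * (τ:ℂ)‖ = Real.sqrt |rr τ * τ * τ| := by
      intro τ
      have h2 : (D τ * (τ:ℂ))^2 = ((rr τ * τ * τ : ℝ):ℂ) := by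
        rw [mul_pow, hDsq]; push_cast; ring
      have h3 : ‖D τ * (τ:ℂ)‖^2 = |rr τ * τ * τ| := by
        rw [← norm_pow, h2]
        simp [Complex.norm_real, Real.norm_eq_abs, abs_mul]
      rw [← h3, Real.sqrt_sq (norm_nonneg _)]
    simp only [hnorm]
    have h4 : Tendsto (fun τ => rr τ * τ * τ) l (𝓝 0) := by
      have := hrt.mul htau0
      simpa using this
    have h5 := ((Real.continuous_sqrt.comp continuous_abs).tendsto 0).comp h4
    convert h5 using 2 <;> simp
  have hDne : ∀ᶠ τ in l, D τ ≠ 0 := by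
    filter_upwards [hrneg] with τ hr
    rw [hD]
    simp only [ne_eq, Complex.cpow_eq_zero_iff, Complex.ofReal_eq_zero, not_and_or, not_not]
    left
    exact ne_of_lt hr
  have hPne : ∀ᶠ τ in l, ((κ:ℂ) - (ρ:ℂ)*(ξ:ℂ)*((wr τ:ℝ):ℂ) + D τ) ≠ 0 := by
    filter_upwards [hrneg] with τ hr hP0
    have him : (D τ).im = 0 := by
      have h := congrArg Complex.im hP0
      simpa using h
    have hre := congrArg Complex.re (hDsq τ)
    simp [pow_two, Complex.mul_re, him] at hre
    nlinarith [hre, hr]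
  have hzne : ∀ᶠ τ in l, D τ * (τ:ℂ) ≠ 0 := by
    filter_upwards [hDne, hτpos] with τ h1 h2
    exact mul_ne_zero h1 (by exact_mod_cast ne_of_gt h2)
  have hQlim : Tendsto Q l (𝓝 1) := by
    have hzz : Tendsto (fun τ => D τ * (τ:ℂ)) l (𝓝[≠] 0) := by
      rw [tendsto_nhdsWithin_iff]
      exact ⟨hz0, hzne⟩
    exact aux_expQ.comp hzz
  have hNt : Tendsto (fun τ => N τ * (τ:ℂ)) l (𝓝 0) := by
    have hreal : Tendsto (fun τ => κ*τ - ρ*ξ*(c*Real.sqrt τ)) l (𝓝 0) := by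
      have h := (htau0.const_mul κ).sub (hs.const_mul (ρ*ξ*c))
      simp only [mul_zero, sub_zero] at h
      refine h.congr fun τ => by ring
    have hrealC : Tendsto (fun τ => ((κ*τ - ρ*ξ*(c*Real.sqrt τ) : ℝ):ℂ)) l (𝓝 0) := by
      have h := (Complex.continuous_ofReal.tendsto 0).comp hreal
      rw [show ((0:ℝ):ℂ) = (0:ℂ) by norm_cast] at h
      exact h
    have h6 := hrealC.sub hz0
    rw [sub_zero] at h6
    refine Tendsto.congr' ?_ h6
    filter_upwards [hτpos] with τ hτ
    have hss : Real.sqrt τ * Real.sqrt τ = τ := Real.mul_self_sqrt hτ.le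
    have hsp : Real.sqrt τ ≠ 0 := ne_of_gt (Real.sqrt_pos.mpr hτ)
    have hwrt : wr τ * τ = c * Real.sqrt τ := by
      rw [hwr_def]
      beta_reduce
      field_simp
      rw [Real.sq_sqrt hτ.le]
    show ((κ*τ - ρ*ξ*(c*Real.sqrt τ) : ℝ):ℂ) - D τ * τ = N τ * τ
    rw [hN_def]
    beta_reduce
    rw [← hwrt]
    push_cast
    ring
  have hKlim : Tendsto (fun τ => 2 + N τ * (τ:ℂ) * Q τ) l (𝓝 2) := by
    have h := (tendsto_const_nhds (x := (2:ℂ))).add (hNt.mul hQlim)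
    simpa using h
  have hKne : ∀ᶠ τ in l, (2 + N τ * (τ:ℂ) * Q τ) ≠ 0 := hKlim.eventually_ne two_ne_zero
  have hT1 : Tendsto (fun τ => ((wr τ:ℝ):ℂ) * (((wr τ:ℝ):ℂ) - 1) * (τ:ℂ)) l (𝓝 ((c^2 : ℝ):ℂ)) := by
    have hreal : Tendsto (fun τ => c^2 - c*Real.sqrt τ) l (𝓝 (c^2)) := by
      have h := (tendsto_const_nhds (x := c^2)).sub (hs.const_mul c)
      simpa using h
    have hC := (Complex.continuous_ofReal.tendsto _).comp hreal
    refine Tendsto.congr' ?_ hC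
    filter_upwards [hτpos] with τ hτ
    have hss : ((Real.sqrt τ : ℝ):ℂ) * ((Real.sqrt τ : ℝ):ℂ) = (τ:ℂ) := by
      exact_mod_cast congrArg (fun x : ℝ => (x:ℂ)) (Real.mul_self_sqrt hτ.le)
    have hsp : ((Real.sqrt τ : ℝ):ℂ) ≠ 0 := by
      exact_mod_cast ne_of_gt (Real.sqrt_pos.mpr hτ)
    show ((c^2 - c*Real.sqrt τ : ℝ):ℂ) = ((wr τ:ℝ):ℂ) * (((wr τ:ℝ):ℂ) - 1) * (τ:ℂ)
    rw [hwr_def]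
    beta_reduce
    push_cast
    rw [← hss]
    field_simp
  -- final combination
  have hfinal := (hT1.mul hQlim).mul (hKlim.inv₀ two_ne_zero)
  have hval : ((u ^ 2 / (2 * a ^ 2) : ℝ):ℂ) = ((c^2:ℝ):ℂ) * 1 * (2:ℂ)⁻¹ := by
    have hr2 : (u ^ 2 / (2 * a ^ 2) : ℝ) = c^2 * 1 * 2⁻¹ := by
      rw [hc_def]
      field_simp
    rw [hr2, Complex.ofReal_mul, Complex.ofReal_mul]
    norm_num
  rw [hval]
  refine Tendsto.congr' ?_ hfinal
  filter_upwards [hτpos, hrneg, hDne, hPne, hKne] with τ hτ hr hD0 hP hK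
  have hτC : (τ:ℂ) ≠ 0 := by exact_mod_cast ne_of_gt hτ
  have hξC : (ξ:ℂ) ≠ 0 := by exact_mod_cast ne_of_gt hξ
  have hDsq' : (D τ)^2 = ((κ:ℂ)-(ρ:ℂ)*(ξ:ℂ)*((wr τ:ℝ):ℂ))^2 + ((wr τ:ℝ):ℂ)*(1-((wr τ:ℝ):ℂ))*(ξ:ℂ)^2 := by
    rw [hDsq τ, hrr_def]
    push_cast
    ring
  have hB := aux_B κ ρ ξ τ ((wr τ:ℝ):ℂ) (D τ) rfl hDsq' hτC hξC hD0 hP (by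
    rw [hN_def] at hK
    exact hK)
  rw [hB]

end
end
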